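/- Let P be a collection of subgroups of a group G such that every P ∈ P has finite index in its commensurator Comm_G(P). Let P* be a refinement of P, i.e., a set of representatives of conjugacy classes of the collection {Comm_G(gPg⁻¹) : P ∈ P, g ∈ G}. Then P* is a reduced collection. -/

import Mathlib

open scoped Pointwise

variable {G : Type*} [Group G]

/-- Word distance between `g` and `h` with respect to a generating set `S` (values in `ℕ∞`). -/
noncomputable def wordDist (S : Set G) (g h : G) : ℕ∞ :=
  sInf {n : ℕ∞ | ∃ l : List G, (∀ x ∈ l, x ∈ S ∨ x⁻¹ ∈ S) ∧ l.prod = g⁻¹ * h ∧ (l.length : ℕ∞) = n}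

/-- Closed `r`-neighbourhood of a subset of `G` in the word metric. -/
def nbhd (S : Set G) (r : ℕ∞) (A : Set G) : Set G := {g | ∃ a ∈ A, wordDist S g a ≤ r}

/-- Hausdorff distance between subsets of `G` in the word metric. -/
noncomputable def hdist (S : Set G) (A B : Set G) : ℕ∞ :=
  sInf {r : ℕ∞ | A ⊆ nbhd S r B ∧ B ⊆ nbhd S r A}

/-- The conjugate subgroup `g P g⁻¹`. -/
def conjSub (g : G) (P : Subgroup G) : Subgroup G := ConjAct.toConjAct g • P

/-- The collection of all left cosets `gP`, `g ∈ G`, `P ∈ Ps`, as subsets of `G`. -/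
def cosetsOf (Ps : Set (Subgroup G)) : Set (Set G) :=
  {A | ∃ (g : G) (P : Subgroup G), P ∈ Ps ∧ A = g • (P : Set G)}

/-- A collection of subgroups is almost malnormal if any conjugate of a member meets any
member in a finite subgroup, except for the trivial configurations. -/
def AlmostMalnormal (Ps : Set (Subgroup G)) : Prop :=
  ∀ P ∈ Ps, ∀ P' ∈ Ps, ∀ g : G,
    ((conjSub g P ⊓ P' : Subgroup G) : Set G).Finite ∨ (P = P' ∧ g ∈ P)

/-- A collection of subgroups is reduced if commensurability of a member with a conjugate of a
member only happens trivially. -/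
def Reduced (Ps : Set (Subgroup G)) : Prop :=
  ∀ P ∈ Ps, ∀ Q ∈ Ps, ∀ g : G, Subgroup.Commensurable P (conjSub g Q) → P = Q ∧ g ∈ P

/-- `Pstar` is a refinement of `Ps`: a set of representatives of conjugacy classes of the
collection of commensurators of conjugates of members of `Ps`. -/
def IsRefinement (Ps Pstar : Set (Subgroup G)) : Prop :=
  (∀ Q ∈ Pstar, ∃ P ∈ Ps, ∃ g : G, Q = Subgroup.Commensurable.commensurator (conjSub g P)) ∧
  (∀ P ∈ Ps, ∀ g : G, ∃ Q ∈ Pstar, ∃ h : G,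
      conjSub h Q = Subgroup.Commensurable.commensurator (conjSub g P)) ∧
  (∀ Q ∈ Pstar, ∀ Q' ∈ Pstar, (∃ h : G, conjSub h Q = Q') → Q = Q')

lemma mem_conjSub {g x : G} {P : Subgroup G} :
    x ∈ conjSub g P ↔ g⁻¹ * x * g ∈ P := by
  rw [conjSub, Subgroup.mem_pointwise_smul_iff_inv_smul_mem, ← map_inv, ConjAct.toConjAct_smul]
  group

lemma commensurator_conjSub (g : G) (P : Subgroup G) :
    Subgroup.Commensurable.commensurator (conjSub g P) = conjSub g (Subgroup.Commensurable.commensurator P) := by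
  ext x
  rw [mem_conjSub, Subgroup.Commensurable.commensurator_mem_iff, Subgroup.Commensurable.commensurator_mem_iff,
    conjSub]
  have hsm : ConjAct.toConjAct x • (ConjAct.toConjAct g • (P : Subgroup G))
      = ConjAct.toConjAct g • (ConjAct.toConjAct (g⁻¹ * x * g) • P) := by
    rw [smul_smul, smul_smul, ← map_mul, ← map_mul]
    congr 1
    group
  rw [hsm]
  exact (Subgroup.Commensurable.commensurable_conj (ConjAct.toConjAct g)).symm

lemma le_comm (P : Subgroup G) : P ≤ Subgroup.Commensurable.commensurator P := by
  intro p hp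
  rw [Subgroup.Commensurable.commensurator_mem_iff]
  have : ConjAct.toConjAct p • P = P := by
    ext x
    rw [Subgroup.mem_pointwise_smul_iff_inv_smul_mem, ← map_inv, ConjAct.toConjAct_smul]
    constructor
    · intro h
      have h2 := P.mul_mem (P.mul_mem hp h) (P.inv_mem hp)
      convert h2 using 1
      group
    · intro h
      have h2 := P.mul_mem (P.mul_mem (P.inv_mem hp) h) hp
      convert h2 using 1
      group
  rw [this]

lemma comm_comm (P : Subgroup G) (h : P.relIndex (Subgroup.Commensurable.commensurator P) ≠ 0) :
    Subgroup.Commensurable.commensurator (Subgroup.Commensurable.commensurator P)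
      = Subgroup.Commensurable.commensurator P := by
  have hc : Subgroup.Commensurable P (Subgroup.Commensurable.commensurator P) := by
    refine ⟨h, ?_⟩
    rw [Subgroup.relIndex_eq_one.mpr (le_comm P)]
    exact one_ne_zero
  exact (Subgroup.Commensurable.eq hc).symm

/-- If each member of `Ps` has finite index in its commensurator, then any
refinement of `Ps` is a reduced collection. -/
theorem refinement_reduced (Ps Pstar : Set (Subgroup G))
    (hfi : ∀ P ∈ Ps, P.relIndex (Subgroup.Commensurable.commensurator P) ≠ 0)
    (href : IsRefinement Ps Pstar) :
    Reduced Pstar := by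
  obtain ⟨h1, _, h3⟩ := href
  intro Q hQ Q' hQ' g hcomm
  -- Comm Q = Q
  have key : ∀ R ∈ Pstar, Subgroup.Commensurable.commensurator R = R := by
    intro R hR
    obtain ⟨P, hP, a, rfl⟩ := h1 R hR
    rw [commensurator_conjSub, commensurator_conjSub, comm_comm P (hfi P hP)]
  have e1 : Subgroup.Commensurable.commensurator Q = Subgroup.Commensurable.commensurator (conjSub g Q') :=
    Subgroup.Commensurable.eq hcomm
  rw [key Q hQ, commensurator_conjSub, key Q' hQ'] at e1
  have hQQ' : Q = Q' := (h3 Q' hQ' Q hQ ⟨g, e1.symm⟩).symm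
  subst hQQ'
  refine ⟨rfl, ?_⟩
  rw [← key Q hQ, Subgroup.Commensurable.commensurator_mem_iff]
  have : ConjAct.toConjAct g • Q = Q := by rw [← conjSub, ← e1]
  rw [this]
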